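/- Let $-\xi$ be a subordinator with killing rate $q\ge0$, no drift and finite Lévy measure $\Pi\ne 0$, and let $f(x)=-\ln\mathbb{P}(I>x)$ where $I$ is the exponential functional. Then $f'(x)=k(x)/\mathbb{P}(I>x)\to \Pi(0,\infty)+q$ as $x\to\infty$, where $k$ is the density of $I$. -/

import Mathlib

open MeasureTheory Filter Real Set
open scoped ENNReal Topology

set_option maxHeartbeats 1600000 in
theorem stmt11 (q : ℝ) (hq : 0 ≤ q)
    (Pim : Measure ℝ) [IsFiniteMeasure Pim] (hsupp : ∀ᵐ x ∂Pim, 0 < x)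
    (hne : Pim (Set.Ioi (0:ℝ)) ≠ 0)
    (ν : Measure ℝ) [IsProbabilityMeasure ν]
    (k : ℝ → ℝ) (hk : ν = volume.withDensity fun x => ENNReal.ofReal (k x))
    (heq : ∀ x > (0:ℝ), k x =
      (∫ v in Set.Ioi (0:ℝ),
        ((ν (Set.Ioi x)).toReal - (ν (Set.Ioi (x * Real.exp v))).toReal) ∂Pim)
      + q * (ν (Set.Ioi x)).toReal)
    (hTpos : ∀ x > (0:ℝ), 0 < (ν (Set.Ioi x)).toReal)
    (hTint : IntegrableOn (fun u => (ν (Set.Ioi u)).toReal) (Set.Ioi 0)) :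
    Tendsto (fun x => k x / (ν (Set.Ioi x)).toReal) atTop
      (𝓝 ((Pim (Set.Ioi (0:ℝ))).toReal + q)) := by
  set T : ℝ → ℝ := fun x => (ν (Set.Ioi x)).toReal with hTdef
  set m : ℝ := (Pim (Set.Ioi (0:ℝ))).toReal with hmdef
  have hfin : ∀ x : ℝ, ν (Set.Ioi x) ≠ ⊤ := fun x => measure_ne_top ν _
  have hTanti : Antitone T := fun a b hab =>
    ENNReal.toReal_mono (hfin a) (measure_mono (Ioi_subset_Ioi hab))
  have hT0 : ∀ x, 0 ≤ T x := fun x => ENNReal.toReal_nonneg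
  have hT1 : ∀ x, T x ≤ 1 := by
    intro x
    have : ν (Set.Ioi x) ≤ 1 := prob_le_one
    simpa using ENNReal.toReal_mono (by simp) this
  have hTmeas : Measurable T := hTanti.measurable
  set R : ℝ → ℝ := fun x => ∫ v in Set.Ioi (0:ℝ), T (x * Real.exp v) ∂Pim with hRdef
  -- integrability in v
  have hRmeas : ∀ x : ℝ, Measurable fun v => T (x * Real.exp v) := fun x =>
    hTmeas.comp (measurable_const.mul Real.measurable_exp)
  have hRint : ∀ (x : ℝ) (s : Set ℝ), Integrable (fun v => T (x * Real.exp v))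
      (Pim.restrict s) := by
    intro x s
    refine Integrable.mono' (integrable_const 1) (hRmeas x).aestronglyMeasurable
      (ae_of_all _ fun v => ?_)
    rw [Real.norm_eq_abs, abs_of_nonneg (hT0 _)]
    exact hT1 _
  -- the basic identity
  have heq' : ∀ x > (0:ℝ), k x = (m + q) * T x - R x := by
    intro x hx
    have h1 : (∫ v in Set.Ioi (0:ℝ), (T x - T (x * Real.exp v)) ∂Pim)
        = m * T x - R x := by
      rw [integral_sub (integrable_const _) (hRint x _), setIntegral_const]
      simp [hmdef, smul_eq_mul, measureReal_def, hRdef]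
    have := heq x hx
    rw [show (∫ v in Set.Ioi (0:ℝ),
        ((ν (Set.Ioi x)).toReal - (ν (Set.Ioi (x * Real.exp v))).toReal) ∂Pim)
        = (∫ v in Set.Ioi (0:ℝ), (T x - T (x * Real.exp v)) ∂Pim) from rfl] at this
    rw [this, h1]
    ring
  -- the key rapid-variation estimate
  have key : ∀ v0 > (0:ℝ), ∀ x > (0:ℝ),
      (Pim (Set.Ioi v0)).toReal * ((Real.exp v0 - 1) * x * T (x * Real.exp v0)) ≤ T x := by
    intro v0 hv0 x hx
    set μ := Real.exp v0 with hμdef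
    have hμ1 : 1 < μ := by
      rw [hμdef, show (1:ℝ) = Real.exp 0 by simp]
      exact Real.exp_lt_exp.mpr hv0
    have hμpos : 0 < μ := lt_trans one_pos hμ1
    set c := (Pim (Set.Ioi v0)).toReal with hcdef
    have hc0 : 0 ≤ c := ENNReal.toReal_nonneg
    -- step (i): pointwise lower bound for k
    have hks : ∀ t > (0:ℝ), c * (T t - T (t * μ)) ≤ k t := by
      intro t ht
      rw [heq t ht]
      have h1 : c * (T t - T (t * μ))
          = ∫ v in Set.Ioi (0:ℝ),
              (Set.Ioi v0).indicator (fun _ => T t - T (t * μ)) v ∂Pim := by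
        rw [setIntegral_indicator measurableSet_Ioi,
          Set.inter_eq_self_of_subset_right (Ioi_subset_Ioi hv0.le), setIntegral_const]
        simp [hcdef, smul_eq_mul, measureReal_def]
      rw [h1]
      have h2 : (∫ v in Set.Ioi (0:ℝ),
          (Set.Ioi v0).indicator (fun _ => T t - T (t * μ)) v ∂Pim)
          ≤ ∫ v in Set.Ioi (0:ℝ), (T t - T (t * Real.exp v)) ∂Pim := by
        refine setIntegral_mono_on
          ((integrable_const _).indicator measurableSet_Ioi).integrableOn
          ((integrable_const _).sub (hRint t _)) measurableSet_Ioi ?_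
        intro v hv
        by_cases hv0v : v ∈ Set.Ioi v0
        · simp only [Set.indicator_of_mem hv0v]
          have : t * μ ≤ t * Real.exp v :=
            mul_le_mul_of_nonneg_left (Real.exp_le_exp.mpr (le_of_lt hv0v)) ht.le
          exact sub_le_sub_left (hTanti this) _
        · simp only [Set.indicator_of_notMem hv0v]
          have h1e : (1:ℝ) ≤ Real.exp v := by
            rw [show (1:ℝ) = Real.exp 0 by simp]
            exact Real.exp_le_exp.mpr (le_of_lt hv)
          have : t ≤ t * Real.exp v := le_mul_of_one_le_right ht.le h1e
          exact sub_nonneg.mpr (hTanti this)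
      have h3 : 0 ≤ q * T t := mul_nonneg hq (hT0 t)
      linarith [h2]
    -- step (ii): T x dominates the integral of the lower bound
    set g : ℝ → ℝ := fun t => c * (T t - T (t * μ)) with hgdef
    have h1 : IntegrableOn T (Set.Ioi x) volume :=
      hTint.mono_set (Ioi_subset_Ioi hx.le)
    have h2 : IntegrableOn (fun t => T (t * μ)) (Set.Ioi x) volume := by
      rw [integrableOn_Ioi_comp_mul_right_iff T x hμpos]
      exact hTint.mono_set (Ioi_subset_Ioi (by positivity))
    have hgint : IntegrableOn g (Set.Ioi x) volume := (h1.sub h2).const_mul c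
    have hgnn : ∀ t ∈ Set.Ioi x, 0 ≤ g t := by
      intro t ht
      have ht0 : 0 < t := lt_trans hx ht
      have : t ≤ t * μ := le_mul_of_one_le_right ht0.le hμ1.le
      exact mul_nonneg hc0 (sub_nonneg.mpr (hTanti this))
    have hintle : (∫ t in Set.Ioi x, g t) ≤ T x := by
      have hν : ν (Set.Ioi x) = ∫⁻ t in Set.Ioi x, ENNReal.ofReal (k t) := by
        rw [hk, withDensity_apply _ measurableSet_Ioi]
      have h1 : ENNReal.ofReal (∫ t in Set.Ioi x, g t)
          = ∫⁻ t in Set.Ioi x, ENNReal.ofReal (g t) :=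
        ofReal_integral_eq_lintegral_ofReal hgint
          ((ae_restrict_iff' measurableSet_Ioi).mpr (ae_of_all _ hgnn))
      have h2 : (∫⁻ t in Set.Ioi x, ENNReal.ofReal (g t))
          ≤ ∫⁻ t in Set.Ioi x, ENNReal.ofReal (k t) :=
        lintegral_mono_ae ((ae_restrict_iff' measurableSet_Ioi).mpr
          (ae_of_all _ fun t ht =>
            ENNReal.ofReal_le_ofReal (hks t (lt_trans hx ht))))
      have h3 : ENNReal.ofReal (∫ t in Set.Ioi x, g t) ≤ ν (Set.Ioi x) := by
        rw [h1, hν]; exact h2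
      have h4 := ENNReal.toReal_mono (hfin x) h3
      rwa [ENNReal.toReal_ofReal (setIntegral_nonneg measurableSet_Ioi hgnn)] at h4
    -- step (iii): lower bound for the integral of g
    have hsplit : (∫ t in Set.Ioi x, g t)
        = c * ((∫ t in Set.Ioi x, T t) - ∫ t in Set.Ioi x, T (t * μ)) :=
      calc (∫ t in Set.Ioi x, g t)
          = ∫ t in Set.Ioi x, c * (T t - T (t * μ)) := rfl
        _ = c * ∫ t in Set.Ioi x, (T t - T (t * μ)) := integral_const_mul c _
        _ = c * ((∫ t in Set.Ioi x, T t) - ∫ t in Set.Ioi x, T (t * μ)) := by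
            rw [integral_sub h1 h2]
    have hcomp : (∫ t in Set.Ioi x, T (t * μ)) = μ⁻¹ * ∫ t in Set.Ioi (x * μ), T t := by
      rw [integral_comp_mul_right_Ioi T x hμpos, smul_eq_mul]
    have hHnn : 0 ≤ ∫ t in Set.Ioi (x * μ), T t :=
      setIntegral_nonneg measurableSet_Ioi fun t _ => hT0 t
    have hle1 : (∫ t in Set.Ioi x, T (t * μ)) ≤ ∫ t in Set.Ioi (x * μ), T t := by
      rw [hcomp]
      nlinarith [inv_le_one_of_one_le₀ hμ1.le, inv_pos.mpr hμpos]
    have hxm : x ≤ x * μ := le_mul_of_one_le_right hx.le hμ1.le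
    have hunion : (∫ t in Set.Ioi x, T t)
        = (∫ t in Set.Ioc x (x * μ), T t) + ∫ t in Set.Ioi (x * μ), T t := by
      rw [← setIntegral_union (Set.Ioc_disjoint_Ioi le_rfl) measurableSet_Ioi
        (h1.mono_set Set.Ioc_subset_Ioi_self)
        (hTint.mono_set (Ioi_subset_Ioi (by positivity))),
        Set.Ioc_union_Ioi_eq_Ioi hxm]
    have hIoc : ((μ - 1) * x) * T (x * μ) ≤ ∫ t in Set.Ioc x (x * μ), T t := by
      have hconst : (∫ t in Set.Ioc x (x * μ), (fun _ => T (x * μ)) t)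
          = ((μ - 1) * x) * T (x * μ) := by
        rw [setIntegral_const, smul_eq_mul, measureReal_def, Real.volume_Ioc,
          ENNReal.toReal_ofReal (by linarith)]
        ring
      have hmono : (∫ t in Set.Ioc x (x * μ), (fun _ => T (x * μ)) t)
          ≤ ∫ t in Set.Ioc x (x * μ), T t := by
        refine setIntegral_mono_on ((integrableOn_const_iff).mpr (Or.inr ?_))
          (h1.mono_set Set.Ioc_subset_Ioi_self) measurableSet_Ioc ?_
        · rw [Real.volume_Ioc]; exact ENNReal.ofReal_lt_top
        · intro t ht
          exact hTanti ht.2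
      rw [← hconst]
      exact hmono
    calc c * ((μ - 1) * x * T (x * μ))
        ≤ c * ((∫ t in Set.Ioi x, T t) - ∫ t in Set.Ioi x, T (t * μ)) := by
          have h5 : ((μ - 1) * x * T (x * μ))
              ≤ (∫ t in Set.Ioi x, T t) - ∫ t in Set.Ioi x, T (t * μ) := by
            rw [hunion]
            linarith [hIoc, hle1]
          exact mul_le_mul_of_nonneg_left h5 hc0
      _ = ∫ t in Set.Ioi x, g t := hsplit.symm
      _ ≤ T x := hintle
  -- R x / T x → 0
  have hRnn : ∀ x : ℝ, 0 ≤ R x := fun x =>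
    setIntegral_nonneg measurableSet_Ioi fun v _ => hT0 _
  have hRT : Tendsto (fun x => R x / T x) atTop (𝓝 0) := by
    rw [Metric.tendsto_atTop]
    intro ε hε
    -- choose v0
    obtain ⟨v0, hv0, ha⟩ : ∃ v0 > (0:ℝ), (Pim (Set.Ioc 0 v0)).toReal < ε / 2 := by
      have hanti : Antitone fun n : ℕ => Set.Ioc (0:ℝ) (1 / (n + 1)) := by
        intro a b hab
        refine Set.Ioc_subset_Ioc_right ?_
        apply one_div_le_one_div_of_le (by positivity)
        exact_mod_cast by omega
      have hiInter : (⋂ n : ℕ, Set.Ioc (0:ℝ) (1 / (n + 1))) = ∅ := by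
        ext y
        simp only [Set.mem_iInter, Set.mem_Ioc, Set.mem_empty_iff_false, iff_false, not_forall]
        by_cases hy : 0 < y
        · obtain ⟨n, hn⟩ := exists_nat_one_div_lt hy
          exact ⟨n, fun h => absurd h.2 (not_le.mpr hn)⟩
        · exact ⟨0, fun h => hy h.1⟩
      have htend : Tendsto (fun n : ℕ => Pim (Set.Ioc (0:ℝ) (1 / (n + 1)))) atTop (𝓝 0) := by
        have := tendsto_measure_iInter_atTop
          (μ := Pim) (s := fun n : ℕ => Set.Ioc (0:ℝ) (1 / (n + 1)))
          (fun n => measurableSet_Ioc.nullMeasurableSet) hanti ⟨0, measure_ne_top _ _⟩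
        rwa [hiInter, measure_empty] at this
      have htendR : Tendsto (fun n : ℕ => (Pim (Set.Ioc (0:ℝ) (1 / (n + 1)))).toReal)
          atTop (𝓝 0) := by
        have := (ENNReal.tendsto_toReal (by simp : (0:ℝ≥0∞) ≠ ⊤)).comp htend
        simpa [Function.comp_def] using this
      have := htendR.eventually_lt_const (by linarith : (0:ℝ) < ε / 2)
      obtain ⟨n, hn⟩ := this.exists
      exact ⟨1 / (n + 1), by positivity, hn⟩
    set μ := Real.exp v0 with hμdef
    have hμ1 : 1 < μ := by
      rw [hμdef, show (1:ℝ) = Real.exp 0 by simp]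
      exact Real.exp_lt_exp.mpr hv0
    set c := (Pim (Set.Ioi v0)).toReal with hcdef
    have hc0 : 0 ≤ c := ENNReal.toReal_nonneg
    set a := (Pim (Set.Ioc 0 v0)).toReal with hadef
    have ha0 : 0 ≤ a := ENNReal.toReal_nonneg
    refine ⟨max 1 (2 / (ε * (μ - 1))), fun x hxN => ?_⟩
    have hx1 : 1 ≤ x := le_trans (le_max_left _ _) hxN
    have hx0 : 0 < x := lt_of_lt_of_le one_pos hx1
    have hx2 : 2 / (ε * (μ - 1)) ≤ x := le_trans (le_max_right _ _) hxN
    have hTx : 0 < T x := hTpos x hx0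
    -- split R
    have hsplit : R x = (∫ v in Set.Ioc 0 v0, T (x * Real.exp v) ∂Pim)
        + ∫ v in Set.Ioi v0, T (x * Real.exp v) ∂Pim := by
      rw [← setIntegral_union (Set.Ioc_disjoint_Ioi le_rfl) measurableSet_Ioi
        (hRint x _) (hRint x _),
        Set.Ioc_union_Ioi_eq_Ioi hv0.le]
    have hb1 : (∫ v in Set.Ioc 0 v0, T (x * Real.exp v) ∂Pim) ≤ a * T x := by
      have : (∫ v in Set.Ioc 0 v0, T (x * Real.exp v) ∂Pim)
          ≤ ∫ _v in Set.Ioc 0 v0, T x ∂Pim := by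
        refine setIntegral_mono_on (hRint x _) (integrable_const _).integrableOn
          measurableSet_Ioc ?_
        intro v hv
        have h1e : (1:ℝ) ≤ Real.exp v := by
          rw [show (1:ℝ) = Real.exp 0 by simp]
          exact Real.exp_le_exp.mpr hv.1.le
        exact hTanti (le_mul_of_one_le_right hx0.le h1e)
      rwa [setIntegral_const, smul_eq_mul] at this
    have hb2 : (∫ v in Set.Ioi v0, T (x * Real.exp v) ∂Pim) ≤ c * T (x * μ) := by
      have : (∫ v in Set.Ioi v0, T (x * Real.exp v) ∂Pim)
          ≤ ∫ _v in Set.Ioi v0, T (x * μ) ∂Pim := by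
        refine setIntegral_mono_on (hRint x _) (integrable_const _).integrableOn
          measurableSet_Ioi ?_
        intro v hv
        exact hTanti (mul_le_mul_of_nonneg_left (Real.exp_le_exp.mpr (le_of_lt hv)) hx0.le)
      rwa [setIntegral_const, smul_eq_mul] at this
    -- apply key
    have hkey := key v0 hv0 x hx0
    rw [← hμdef, ← hcdef] at hkey
    have hd : 0 < (μ - 1) * x := mul_pos (by linarith) hx0
    have hcT : c * T (x * μ) ≤ T x / ((μ - 1) * x) := by
      rw [le_div_iff₀ hd]
      nlinarith [hkey]
    have hεμ : (0:ℝ) < ε * (μ - 1) := mul_pos hε (by linarith)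
    have hεd : 1 / ((μ - 1) * x) ≤ ε / 2 := by
      rw [div_le_div_iff₀ hd (by norm_num : (0:ℝ) < 2)]
      have h2 : 2 / (ε * (μ - 1)) * (ε * (μ - 1)) = 2 :=
        div_mul_cancel₀ _ hεμ.ne'
      nlinarith [mul_le_mul_of_nonneg_right hx2 hεμ.le]
    have hRle : R x ≤ (a + ε / 2) * T x := by
      have h1 : T x / ((μ - 1) * x) ≤ (ε / 2) * T x := by
        rw [div_le_iff₀ hd]
        have h2 : (1:ℝ) ≤ ε / 2 * ((μ - 1) * x) := (div_le_iff₀ hd).mp hεd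
        nlinarith [hTx.le]
      rw [hsplit]
      nlinarith [hb1, hb2, hcT]
    have : R x / T x ≤ a + ε / 2 := by
      rw [div_le_iff₀ hTx]
      exact hRle
    rw [Real.dist_eq, sub_zero, abs_of_nonneg (div_nonneg (hRnn x) hTx.le)]
    linarith
  -- conclude
  have hfinal : Tendsto (fun x => (m + q) - R x / T x) atTop (𝓝 ((m + q) - 0)) :=
    tendsto_const_nhds.sub hRT
  rw [sub_zero] at hfinal
  refine hfinal.congr' ?_
  filter_upwards [eventually_gt_atTop 0] with x hx
  rw [heq' x hx]
  have hTx : T x ≠ 0 := (hTpos x hx).ne'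
  field_simp
  exact (mul_div_cancel_left₀ _ hTx).symm
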